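/- Let r be a positive integer and let k_1, …, k_{φ(r)} be the integers with 0 < k_i < r and gcd(k_i, r) = 1, with k_1 ≡ −k_2 (mod r). If φ(r) > 4, then Σ_{i=3}^{φ(r)} { (k_1 + k_i)/r } ≥ 1, where {q} denotes the fractional part. -/

import Mathlib

lemma fract_nat_div (r m : ℕ) (hr : 0 < r) : Int.fract ((m : ℝ) / r) = ((m % r : ℕ) : ℝ) / r := by
  conv_lhs => rw [← Nat.div_add_mod m r]
  have hr' : (r:ℝ) ≠ 0 := Nat.cast_ne_zero.mpr hr.ne'
  push_cast
  rw [add_div, mul_div_cancel_left₀ _ hr', Int.fract_natCast_add, Int.fract_eq_self.mpr]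
  refine ⟨by positivity, ?_⟩
  rw [div_lt_one (by positivity)]
  exact_mod_cast Nat.mod_lt m hr

lemma finA1 (σ c2 T a n r : ℤ) (key : 2*σ + 2*c2 + 2*T*r = 2*a*n + n*r)
    (hc2 : c2 = 2*a) (h22 : 2*T + 2 ≤ n) (ha : 1 ≤ a) (hn : 6 ≤ n) (hr : 7 ≤ r) : r ≤ σ := by
  nlinarith [mul_le_mul_of_nonneg_right h22 (by linarith : (0:ℤ) ≤ r),
    mul_nonneg (by linarith : (0:ℤ) ≤ a) (by linarith : (0:ℤ) ≤ n - 2)]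
lemma finA2 (σ c2 T a n r : ℤ) (key : 2*σ + 2*c2 + 2*T*r = 2*a*n + n*r)
    (hc2 : c2 = 2*a) (h2T : 2*T ≤ n) (h3a : r + 1 ≤ 3*a) (ha : 1 ≤ a) (hn : 6 ≤ n)
    (hr : 7 ≤ r) : r ≤ σ := by
  nlinarith [mul_le_mul_of_nonneg_right h2T (by linarith : (0:ℤ) ≤ r),
    mul_le_mul_of_nonneg_left hn (by linarith : (0:ℤ) ≤ a)]
lemma finA3 (σ c2 T a n r : ℤ) (key : 2*σ + 2*c2 + 2*T*r = 2*a*n + n*r)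
    (hc2 : c2 = 2*a) (h2T : 2*T ≤ n) (h2a : r ≤ 2*a + 4) (ha : 1 ≤ a) (hn : 6 ≤ n)
    (hr : 8 ≤ r) : r ≤ σ := by
  nlinarith [mul_le_mul_of_nonneg_right h2T (by linarith : (0:ℤ) ≤ r),
    mul_le_mul_of_nonneg_left hn (by linarith : (0:ℤ) ≤ a)]
lemma finB1 (σ c2 T a n r : ℤ) (key : 2*σ + 2*c2 + 2*T*r = 2*a*n + n*r)
    (hc2 : c2 + r = 2*a) (hT : T + 1 ≤ n) (h2a : r + 1 ≤ 2*a) (hn : 6 ≤ n)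
    (hr : 7 ≤ r) : r ≤ σ := by
  nlinarith [mul_le_mul_of_nonneg_right hT (by linarith : (0:ℤ) ≤ r),
    mul_le_mul_of_nonneg_right h2a (by linarith : (0:ℤ) ≤ n - 2)]
lemma finB2 (σ c2 T a n r : ℤ) (key : 2*σ + 2*c2 + 2*T*r = 2*a*n + n*r)
    (hc2 : c2 + r = 2*a) (hT : T ≤ n) (ha : a = r - 1) (hn : 6 ≤ n)
    (hr : 7 ≤ r) : r ≤ σ := by
  nlinarith [mul_le_mul_of_nonneg_right hT (by linarith : (0:ℤ) ≤ r),
    mul_le_mul_of_nonneg_right (by linarith : (4:ℤ) ≤ n - 2) (by linarith : (0:ℤ) ≤ r - 2)]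

lemma core (r a : ℕ) (hr7 : 7 ≤ r) (hn5 : 5 ≤ Nat.totient r) (ha0 : 0 < a) (har : a < r)
    (hacop : r.Coprime a) :
    r ≤ ∑ x ∈ ((Finset.filter (fun x => r.Coprime x) (Finset.range r)).erase a).erase (r - a),
        (a + x) % r := by
  set n := Nat.totient r with hn
  have hn6 : 6 ≤ n := by
    have := Nat.totient_even (show 2 < r by omega)
    rw [Nat.even_iff] at this; omega
  set U := Finset.filter (fun x => r.Coprime x) (Finset.range r) with hU
  have hUcard : U.card = n := (Nat.totient_eq_card_coprime r).symm
  have hUmem : ∀ x ∈ U, 0 < x ∧ x < r ∧ r.Coprime x := by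
    intro x hx
    obtain ⟨hx1, hx2⟩ := Finset.mem_filter.mp hx
    have hx0 : x ≠ 0 := by
      rintro rfl
      rw [Nat.coprime_zero_right] at hx2
      omega
    exact ⟨Nat.pos_of_ne_zero hx0, Finset.mem_range.mp hx1, hx2⟩
  have hUmem' : ∀ x, 0 < x → x < r → r.Coprime x → x ∈ U := by
    intro x h1 h2 h3
    exact Finset.mem_filter.mpr ⟨Finset.mem_range.mpr h2, h3⟩
  have hrefl : ∀ x ∈ U, r - x ∈ U := by
    intro x hx
    obtain ⟨h1, h2, h3⟩ := hUmem x hx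
    exact hUmem' _ (by omega) (by omega)
      ((Nat.coprime_self_sub_right (by omega)).mpr h3)
  -- sum of units
  have hQrefl : ∑ x ∈ U, x = ∑ x ∈ U, (r - x) := by
    apply Finset.sum_nbij' (i := fun x => r - x) (j := fun x => r - x) hrefl hrefl
    · intro x hx; have := hUmem x hx; omega
    · intro x hx; have := hUmem x hx; omega
    · intro x hx; have := hUmem x hx; omega
  have hQ : 2 * ∑ x ∈ U, x = n * r := by
    have h2 : (∑ x ∈ U, x) + (∑ x ∈ U, (r - x)) = ∑ x ∈ U, r := by
      rw [← Finset.sum_add_distrib]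
      apply Finset.sum_congr rfl
      intro x hx; have := hUmem x hx; omega
    rw [Finset.sum_const, hUcard, smul_eq_mul] at h2
    rw [hQrefl]
    omega
  set F2 := U.filter (fun x => r ≤ a + x) with hF2
  set F1 := U.filter (fun x => x ≤ a) with hF1
  set T := F2.card with hT
  have hTT : F1.card = T := by
    rw [hT]
    apply Finset.card_nbij' (i := fun x => r - x) (j := fun x => r - x)
    · intro x hx
      obtain ⟨hxU, hxa⟩ := Finset.mem_filter.mp hx
      have := hUmem x hxU
      exact Finset.mem_filter.mpr ⟨hrefl x hxU, by beta_reduce; omega⟩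
    · intro x hx
      obtain ⟨hxU, hxa⟩ := Finset.mem_filter.mp hx
      have := hUmem x hxU
      exact Finset.mem_filter.mpr ⟨hrefl x hxU, by beta_reduce; omega⟩
    · intro x hx
      obtain ⟨hxU, hxa⟩ := Finset.mem_filter.mp hx
      have := hUmem x hxU; beta_reduce; omega
    · intro x hx
      obtain ⟨hxU, hxa⟩ := Finset.mem_filter.mp hx
      have := hUmem x hxU; beta_reduce; omega
  have hE1 : (∑ x ∈ U, (a + x) % r) + T * r = a * n + ∑ x ∈ U, x := by
    have h1 : ∀ x ∈ U, (a + x) % r + (if r ≤ a + x then r else 0) = a + x := by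
      intro x hx
      obtain ⟨h1, h2, h3⟩ := hUmem x hx
      split_ifs with h
      · rw [Nat.mod_eq_sub_mod h, Nat.mod_eq_of_lt (by omega)]; omega
      · rw [Nat.mod_eq_of_lt (by omega)]; omega
    have h2 : (∑ x ∈ U, ((a + x) % r + if r ≤ a + x then r else 0))
        = ∑ x ∈ U, (a + x) := Finset.sum_congr rfl h1
    have h3 : ∑ x ∈ U, (if r ≤ a + x then r else 0) = T * r := by
      rw [Finset.sum_ite, Finset.sum_const, Finset.sum_const, ← hF2]
      simp [hT]
    have h4 : ∑ x ∈ U, (a + x) = a * n + ∑ x ∈ U, x := by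
      rw [Finset.sum_add_distrib, Finset.sum_const, hUcard, smul_eq_mul, mul_comm n a]
    rw [Finset.sum_add_distrib, h3, h4] at h2
    exact h2
  -- now remove the a and r-a terms
  have haU : a ∈ U := hUmem' a ha0 har hacop
  have hbU : r - a ∈ U := hrefl a haU
  have hab : a ≠ r - a := by
    intro h
    have h2 : 2 * a = r := by omega
    have : a ∣ r := ⟨2, by omega⟩
    have ha1 : a = 1 := Nat.Coprime.eq_one_of_dvd hacop.symm this
    omega
  have hbUa : r - a ∈ U.erase a := Finset.mem_erase.mpr ⟨fun h => hab (by omega), hbU⟩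
  have hE4 : (∑ x ∈ ((U.erase a).erase (r-a)), (a + x) % r) + (2 * a) % r
      = ∑ x ∈ U, (a + x) % r := by
    rw [← Finset.add_sum_erase U _ haU, ← Finset.add_sum_erase (U.erase a) _ hbUa]
    have hra : (a + (r - a)) % r = 0 := by
      have : a + (r - a) = r := by omega
      rw [this, Nat.mod_self]
    rw [hra]
    have : a + a = 2 * a := by ring
    rw [this]
    ring
  set σ := ∑ x ∈ ((U.erase a).erase (r-a)), (a + x) % r with hσ
  set Q := ∑ x ∈ U, x with hQdef
  set c2 := (2 * a) % r with hc2def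
  have keyN : σ + c2 + T * r = a * n + Q := by omega
  have key : 2*(σ:ℤ) + 2*(c2:ℤ) + 2*(T:ℤ)*(r:ℤ) = 2*(a:ℤ)*(n:ℤ) + (n:ℤ)*(r:ℤ) := by
    have e1 : (σ:ℤ) + (c2:ℤ) + (T:ℤ)*(r:ℤ) = (a:ℤ)*(n:ℤ) + (Q:ℤ) := by exact_mod_cast keyN
    have e2 : 2*(Q:ℤ) = (n:ℤ)*(r:ℤ) := by exact_mod_cast hQ
    linarith
  suffices hgoal : (r:ℤ) ≤ (σ:ℤ) by exact_mod_cast hgoal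
  have hnZ : (6:ℤ) ≤ (n:ℤ) := by exact_mod_cast hn6
  have hrZ : (7:ℤ) ≤ (r:ℤ) := by exact_mod_cast hr7
  have haZ : (1:ℤ) ≤ (a:ℤ) := by exact_mod_cast ha0
  have harZ : (a:ℤ) < (r:ℤ) := by exact_mod_cast har
  -- bound: 2T ≤ n  (in case 2a < r), from disjointness
  rcases lt_trichotomy (2*a) r with h2a | h2a | h2a
  · -- case A : 2a < r
    have hc2v : (c2:ℤ) = 2*(a:ℤ) := by
      have : c2 = 2*a := Nat.mod_eq_of_lt h2a
      exact_mod_cast this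
    have hdisj : Disjoint F1 F2 := by
      rw [Finset.disjoint_left]
      intro x hx1 hx2
      obtain ⟨-, hxa⟩ := Finset.mem_filter.mp hx1
      obtain ⟨-, hxr⟩ := Finset.mem_filter.mp hx2
      omega
    have h2T : 2*T ≤ n := by
      have h1 : (F1 ∪ F2).card = F1.card + F2.card := Finset.card_union_of_disjoint hdisj
      have h2 : F1 ∪ F2 ⊆ U :=
        Finset.union_subset (Finset.filter_subset _ _) (Finset.filter_subset _ _)
      have := Finset.card_le_card h2
      omega
    -- a helper : if there is a unit w with a < w and a + w < r then 2T+2 ≤ n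
    have hwit : ∀ w : ℕ, w ∈ U → a < w → a + w < r → 2*T + 2 ≤ n := by
      intro w hwU hw1 hw2
      have hwF : w ∉ F1 ∪ F2 := by
        rw [Finset.mem_union]
        rintro (h | h)
        · exact absurd (Finset.mem_filter.mp h).2 (by omega)
        · exact absurd (Finset.mem_filter.mp h).2 (by omega)
      have h1 : (insert w (F1 ∪ F2)).card = (F1 ∪ F2).card + 1 :=
        Finset.card_insert_of_notMem hwF
      have h2 : insert w (F1 ∪ F2) ⊆ U := by
        refine Finset.insert_subset hwU ?_
        exact Finset.union_subset (Finset.filter_subset _ _) (Finset.filter_subset _ _)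
      have h3 := Finset.card_le_card h2
      have h4 : (F1 ∪ F2).card = F1.card + F2.card := Finset.card_union_of_disjoint hdisj
      have h5 : 2*T + 1 ≤ n := by omega
      have : Even n := by rw [hn]; exact Nat.totient_even (by omega)
      rw [Nat.even_iff] at this
      omega
    -- final numeric finisher given either 2T+2 ≤ n, or a lower bound on a
    rcases Nat.even_or_odd r with hre | hro
    · -- r even
      obtain ⟨t, ht⟩ := hre
      have htr : r = 2*t := by omega
      rcases Nat.even_or_odd t with hte | hto
      · -- 4 ∣ r, w = t - 1
        have hwcop : r.Coprime (t-1) := by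
          rw [htr]
          refine Nat.Coprime.mul ?_ ?_
          · exact Nat.coprime_two_left.mpr (Nat.odd_iff.mpr (by
              rw [Nat.even_iff] at hte; omega))
          · exact (Nat.coprime_self_sub_right (by omega)).mpr (Nat.coprime_one_right t)
        have hwU : t - 1 ∈ U := hUmem' _ (by omega) (by omega) hwcop
        by_cases hwa : t - 1 ≤ a
        · -- a = t-1, 2a = r-2
          have h2av : r ≤ 2*a + 4 := by omega
          refine finA3 _ _ _ _ _ _ key hc2v (by exact_mod_cast h2T)
            (by exact_mod_cast h2av) haZ hnZ (by exact_mod_cast (show 8 ≤ r by omega))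
        · have h22 := hwit (t-1) hwU (by omega) (by omega)
          exact finA1 _ _ _ _ _ _ key hc2v (by exact_mod_cast h22) haZ hnZ hrZ
      · -- r ≡ 2 mod 4, w = t - 2
        have ht3 : 3 ≤ t := by omega
        have hwcop : r.Coprime (t-2) := by
          rw [htr]
          refine Nat.Coprime.mul ?_ ?_
          · exact Nat.coprime_two_left.mpr (Nat.odd_iff.mpr (by
              rw [Nat.odd_iff] at hto; omega))
          · exact (Nat.coprime_self_sub_right (by omega)).mpr
              (Nat.coprime_two_right.mpr hto)
        have hwU : t - 2 ∈ U := hUmem' _ (by omega) (by omega) hwcop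
        by_cases hwa : t - 2 ≤ a
        · -- 2a ≥ r-4
          have h2av : r ≤ 2*a + 4 := by omega
          refine finA3 _ _ _ _ _ _ key hc2v (by exact_mod_cast h2T)
            (by exact_mod_cast h2av) haZ hnZ (by exact_mod_cast (show 8 ≤ r by omega))
        · have h22 := hwit (t-2) hwU (by omega) (by omega)
          exact finA1 _ _ _ _ _ _ key hc2v (by exact_mod_cast h22) haZ hnZ hrZ
    · -- r odd, w = 2a
      have hwcop : r.Coprime (2*a) :=
        Nat.Coprime.mul_right (Nat.coprime_two_right.mpr hro) hacop
      have hwU : 2*a ∈ U := hUmem' _ (by omega) h2a hwcop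
      by_cases h3a : 3*a < r
      · have h22 := hwit (2*a) hwU (by omega) (by omega)
        exact finA1 _ _ _ _ _ _ key hc2v (by exact_mod_cast h22) haZ hnZ hrZ
      · have h3ne : 3*a ≠ r := by
          intro h
          have hdvd : a ∣ r := ⟨3, by omega⟩
          have := Nat.Coprime.eq_one_of_dvd hacop.symm hdvd
          omega
        refine finA2 _ _ _ _ _ _ key hc2v (by exact_mod_cast h2T)
          (by exact_mod_cast (show r + 1 ≤ 3*a by omega)) haZ hnZ hrZ
  · -- 2a = r impossible
    exfalso
    have hdvd : a ∣ r := ⟨2, by omega⟩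
    have := Nat.Coprime.eq_one_of_dvd hacop.symm hdvd
    omega
  · -- case B : r < 2a
    have hc2v : (c2:ℤ) + (r:ℤ) = 2*(a:ℤ) := by
      have h1 : c2 = 2*a - r := by
        rw [hc2def, Nat.mod_eq_sub_mod (by omega), Nat.mod_eq_of_lt (by omega)]
      have : c2 + r = 2*a := by omega
      exact_mod_cast this
    have h2aZ : (r:ℤ) < 2*(a:ℤ) := by exact_mod_cast h2a
    by_cases har1 : a = r - 1
    · have hTn : T ≤ n := by
        rw [hT]
        exact le_trans (Finset.card_le_card (Finset.filter_subset _ _)) (le_of_eq hUcard)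
      have haZ' : (a:ℤ) = (r:ℤ) - 1 := by
        have h : a + 1 = r := by omega
        have h2 := congrArg (fun x : ℕ => (x:ℤ)) h
        push_cast at h2
        linarith
      exact finB2 _ _ _ _ _ _ key hc2v (by exact_mod_cast hTn) haZ' hnZ hrZ
    · have h1U : 1 ∈ U := hUmem' 1 (by omega) (by omega) (Nat.coprime_one_right r)
      have h1F2 : 1 ∉ F2 := by
        rw [hF2, Finset.mem_filter]
        rintro ⟨-, hc⟩
        omega
      have hTn : T + 1 ≤ n := by
        have hss : F2 ⊂ U := by
          rw [Finset.ssubset_iff_of_subset (Finset.filter_subset _ _)]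
          exact ⟨1, h1U, h1F2⟩
        have := Finset.card_lt_card hss
        omega
      exact finB1 _ _ _ _ _ _ key hc2v (by exact_mod_cast hTn)
        (by exact_mod_cast (show r + 1 ≤ 2*a by omega)) hnZ hrZ

lemma aux (r : ℕ) (hr : 0 < r) (hphi : 4 < Nat.totient r)
    (k : Fin (Nat.totient r) → ℕ)
    (hinj : Function.Injective k)
    (hrange : ∀ i, 0 < k i ∧ k i < r ∧ Nat.Coprime (k i) r)
    (i0 i1 : Fin (Nat.totient r)) (h01 : i0 ≠ i1)
    (hk12 : (k i0 + k i1) % r = 0) :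
    1 ≤ ∑ i ∈ (Finset.univ.erase i0).erase i1,
        Int.fract (((k i0 + k i : ℕ) : ℝ) / (r : ℝ)) := by
  have hr7 : 7 ≤ r := by
    by_contra h
    push_neg at h
    clear hk12 hrange hinj h01 k i0 i1
    interval_cases r <;> revert hphi <;> decide
  obtain ⟨ha0, har, hacop⟩ := hrange i0
  obtain ⟨hb0, hbr, hbcop⟩ := hrange i1
  have hk1 : k i1 = r - k i0 := by
    have hd : r ∣ k i0 + k i1 := Nat.dvd_of_mod_eq_zero hk12
    obtain ⟨c, hc⟩ := hd
    have hne : k i0 ≠ k i1 := fun h => h01 (hinj h)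
    have hc0 : c ≠ 0 := by rintro rfl; simp at hc; omega
    have hc1 : c = 1 := by
      by_contra hcc
      have h2 : 2 ≤ c := by omega
      have := Nat.mul_le_mul_left r h2
      omega
    rw [hc1, mul_one] at hc
    omega
  set U := Finset.filter (fun x => r.Coprime x) (Finset.range r) with hU
  have hUcard : U.card = Nat.totient r := (Nat.totient_eq_card_coprime r).symm
  have himage : Finset.image k Finset.univ = U := by
    apply Finset.eq_of_subset_of_card_le
    · intro x hx
      simp only [Finset.mem_image] at hx
      obtain ⟨i, -, rfl⟩ := hx
      exact Finset.mem_filter.mpr ⟨Finset.mem_range.mpr (hrange i).2.1, (hrange i).2.2.symm⟩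
    · rw [hUcard, Finset.card_image_of_injective _ hinj, Finset.card_univ, Fintype.card_fin]
  have hset : ((Finset.univ.erase i0).erase i1).image k = (U.erase (k i0)).erase (r - k i0) := by
    rw [Finset.image_erase hinj, Finset.image_erase hinj, himage, hk1]
  have htrans : ∑ i ∈ (Finset.univ.erase i0).erase i1,
      Int.fract (((k i0 + k i : ℕ) : ℝ) / (r : ℝ))
      = ∑ x ∈ (U.erase (k i0)).erase (r - k i0),
          Int.fract (((k i0 + x : ℕ) : ℝ) / (r : ℝ)) := by
    rw [← hset, Finset.sum_image (fun i _ j _ h => hinj h)]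
  rw [htrans]
  have hfr : ∀ x ∈ (U.erase (k i0)).erase (r - k i0),
      Int.fract (((k i0 + x : ℕ) : ℝ) / (r : ℝ)) = (((k i0 + x) % r : ℕ) : ℝ) / r :=
    fun x _ => fract_nat_div r (k i0 + x) hr
  rw [Finset.sum_congr rfl hfr, ← Finset.sum_div]
  rw [le_div_iff₀ (by positivity : (0:ℝ) < (r:ℝ)), one_mul]
  rw [← Nat.cast_sum]
  exact_mod_cast core r (k i0) hr7 hphi ha0 har hacop.symm

/-- Let `k_1,…,k_{φ(r)}` enumerate the integers in `(0,r)` coprime to `r`,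
with `k_1 + k_2 ≡ 0 (mod r)`. If `φ(r) > 4` then `Σ_{i=3}^{φ(r)} {(k_1 + k_i)/r} ≥ 1`. -/
theorem stmt_10 (r : ℕ) (hr : 0 < r) (hphi : 4 < Nat.totient r)
    (k : Fin (Nat.totient r) → ℕ)
    (hinj : Function.Injective k)
    (hrange : ∀ i, 0 < k i ∧ k i < r ∧ Nat.Coprime (k i) r)
    (hk12 : (k ⟨0, by omega⟩ + k ⟨1, by omega⟩) % r = 0) :
    1 ≤ ∑ i ∈ (Finset.univ.erase (⟨0, by omega⟩ : Fin (Nat.totient r))).erase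
          (⟨1, by omega⟩ : Fin (Nat.totient r)),
        Int.fract (((k ⟨0, by omega⟩ + k i : ℕ) : ℝ) / (r : ℝ)) := by
  exact aux r hr hphi k hinj hrange ⟨0, by omega⟩ ⟨1, by omega⟩
    (Fin.ne_of_val_ne (by norm_num)) hk12
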